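/- Let λ be an eigenvalue of a real n×n matrix A with algebraic multiplicity m ≥ 1 and geometric multiplicity m, and let β = λ²/4 with λ ≠ 0. Then the augmented matrix A_β = [[A, -βI],[I, 0]] has eigenvalue μ = λ/2 with geometric multiplicity m and algebraic multiplicity at least 2m; in particular A_β is not diagonalizable. -/

import Mathlib

open Matrix Polynomial

noncomputable abbrev K := FractionRing (Polynomial ℝ)
noncomputable abbrev ι : Polynomial ℝ →+* K := algebraMap (Polynomial ℝ) K

lemma ιX_ne : ι X ≠ 0 := by
  intro h
  exact X_ne_zero ((IsFractionRing.injective (Polynomial ℝ) K).eq_iff.mp (by simpa using h))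

lemma exists_s (β : ℝ) (r : Polynomial ℝ) (d : ℕ) (hd : r.natDegree ≤ d) :
    ∃ s : Polynomial ℝ, ι s =
      ι X ^ d * r.eval₂ (ι.comp Polynomial.C) (ι (X ^ 2 + Polynomial.C β) * (ι X)⁻¹) := by
  set t : K := ι (X ^ 2 + Polynomial.C β) * (ι X)⁻¹ with ht
  refine ⟨∑ k ∈ Finset.range (d + 1),
    Polynomial.C (r.coeff k) * X ^ (d - k) * (X ^ 2 + Polynomial.C β) ^ k, ?_⟩
  rw [Polynomial.eval₂_eq_sum_range' (ι.comp Polynomial.C) (Nat.lt_succ_of_le hd) t, Finset.mul_sum, map_sum]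
  refine Finset.sum_congr rfl fun k hk => ?_
  have hkd : k ≤ d := Nat.lt_succ_iff.mp (Finset.mem_range.mp hk)
  have hXd : (ι X) ^ d = ι X ^ (d - k) * ι X ^ k := by
    rw [← pow_add]; congr 1; omega
  rw [_root_.map_mul, _root_.map_mul, map_pow, map_pow, ht, mul_pow]
  have hne : (ι X : K) ^ k ≠ 0 := pow_ne_zero _ ιX_ne
  field_simp [RingHom.comp_apply]
  rw [hXd]
  rw [RingHom.comp_apply, one_div, inv_pow]
  field_simp

lemma charpoly_eval₂ {R S : Type*} [CommRing R] [CommRing S] {I : Type*} [Fintype I] [DecidableEq I]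
    (M : Matrix I I R) (f : R →+* S) (x : S) :
    (Matrix.charpoly M).eval₂ f x = Matrix.det (x • (1 : Matrix I I S) - M.map f) := by
  have h : (Matrix.charpoly M).eval₂ f x = ((charmatrix M).map (eval₂RingHom f x)).det := by
    rw [Matrix.charpoly]; exact (RingHom.map_det (eval₂RingHom f x) _)
  rw [h]
  congr 1
  ext i j
  by_cases hij : i = j
  · subst hij; simp [charmatrix_apply_eq, Matrix.one_apply, mul_comm]
  · simp [charmatrix_apply_ne _ _ _ hij, Matrix.one_apply_ne hij, Matrix.map_apply]

lemma det_block_aux {R : Type*} [CommRing R] {I : Type*} [Fintype I] [DecidableEq I]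
    (P : Matrix I I R) (b x : R) :
    ∃ u : R, IsUnit u ∧
      Matrix.det (fromBlocks P (b • 1) (-1) (x • (1 : Matrix I I R)))
        = u * Matrix.det (x • P + b • 1) := by
  set E : Matrix (I ⊕ I) (I ⊕ I) R := fromBlocks P (b • 1) (-1) (x • 1) with hE
  set U : Matrix (I ⊕ I) (I ⊕ I) R := fromBlocks 1 (x • 1) 0 1 with hU
  set V : Matrix (I ⊕ I) (I ⊕ I) R := fromBlocks 0 1 (-1) 0 with hV
  have hEU : E * U = fromBlocks P (x • P + b • 1) (-1) 0 := by
    rw [hE, hU, fromBlocks_multiply]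
    simp [Matrix.mul_smul, Matrix.smul_mul, add_comm]
  have hEUV : E * U * V = fromBlocks (-(x • P + b • 1)) P 0 (-1) := by
    rw [hEU, hV, fromBlocks_multiply]
    congr 1 <;> simp
  have hdetU : U.det = 1 := by rw [hU, det_fromBlocks_zero₂₁]; simp
  have hVV : V * V = -1 := by
    rw [hV, fromBlocks_multiply]
    simp [← Matrix.fromBlocks_one, fromBlocks_neg]
  have hdetVunit : IsUnit V.det := by
    have : V.det * V.det = ((-1 : R)) ^ (Fintype.card (I ⊕ I)) := by
      rw [← det_mul, hVV]; simp [Matrix.det_neg]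
    exact isUnit_of_mul_isUnit_left (by rw [this]; exact (IsUnit.neg isUnit_one).pow _)
  have key : E.det * V.det = (x • P + b • 1).det := by
    have h1 : (E * U * V).det = E.det * V.det := by rw [det_mul, det_mul, hdetU, mul_one]
    rw [hEUV] at h1
    rw [← h1, det_fromBlocks_zero₂₁, Matrix.det_neg, Matrix.det_neg]
    rw [Matrix.det_one, mul_one, mul_right_comm, ← mul_pow]
    simp
  obtain ⟨v, hv⟩ := hdetVunit.exists_right_inv
  refine ⟨v, ?_, ?_⟩
  · exact IsUnit.of_mul_eq_one V.det (by rw [mul_comm]; exact hv)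
  · calc E.det = E.det * (V.det * v) := by rw [hv, mul_one]
    _ = v * (x • P + b • 1).det := by rw [← mul_assoc, key, mul_comm]

lemma part2 {n : ℕ} (A : Matrix (Fin n) (Fin n) ℝ) (lam β : ℝ) (m : ℕ)
    (hβ : β = lam ^ 2 / 4)
    (halg : (Matrix.charpoly A).rootMultiplicity lam = m) :
    2 * m ≤ (Matrix.charpoly
      (fromBlocks A (-β • 1) 1 (0 : Matrix (Fin n) (Fin n) ℝ))).rootMultiplicity (lam / 2) := by
  classical
  set q : Polynomial ℝ := Matrix.charpoly A with hqdef
  have hq0 : q ≠ 0 := (Matrix.charpoly_monic A).ne_zero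
  have hdvd : (X - Polynomial.C lam) ^ m ∣ q := halg ▸ Polynomial.pow_rootMultiplicity_dvd q lam
  obtain ⟨r, hr⟩ := hdvd
  have hr0 : r ≠ 0 := fun h => hq0 (by rw [hr, h, mul_zero])
  have hqdeg : q.natDegree = n := by
    rw [hqdef, Matrix.charpoly_natDegree_eq_dim, Fintype.card_fin]
  have hdegmul : q.natDegree = m + r.natDegree := by
    rw [hr, Polynomial.natDegree_mul (pow_ne_zero _ (Polynomial.X_sub_C_ne_zero lam)) hr0,
      Polynomial.natDegree_pow, Polynomial.natDegree_X_sub_C, mul_one]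
  have hmn : m ≤ n := by omega
  have hrdeg : r.natDegree = n - m := by omega
  obtain ⟨s, hs⟩ := exists_s β r (n - m) (le_of_eq hrdeg)
  set f : ℝ →+* K := ι.comp Polynomial.C with hf
  set t : K := ι (X ^ 2 + Polynomial.C β) * (ι X)⁻¹ with ht
  -- charmatrix of the block matrix
  have hcm : charmatrix (fromBlocks A (-β • 1) 1 (0 : Matrix (Fin n) (Fin n) ℝ)) =
      fromBlocks (charmatrix A) (Polynomial.C β • 1) (-1) ((X : Polynomial ℝ) • 1) := by
    have hb : -(((-β) • (1 : Matrix (Fin n) (Fin n) ℝ)).map Polynomial.C)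
        = Polynomial.C β • (1 : Matrix (Fin n) (Fin n) (Polynomial ℝ)) := by
      ext i j
      by_cases h : i = j <;> simp [Matrix.map_apply, Matrix.one_apply, h]
    have hc : -((1 : Matrix (Fin n) (Fin n) ℝ).map Polynomial.C)
        = (-1 : Matrix (Fin n) (Fin n) (Polynomial ℝ)) := by
      ext i j
      by_cases h : i = j <;> simp [Matrix.map_apply, Matrix.one_apply, h]
    have hd : charmatrix (0 : Matrix (Fin n) (Fin n) ℝ)
        = (X : Polynomial ℝ) • (1 : Matrix (Fin n) (Fin n) (Polynomial ℝ)) := by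
      ext i j
      by_cases h : i = j <;>
        simp [charmatrix_apply, Matrix.one_apply, Matrix.diagonal_apply, h]
    rw [charmatrix_fromBlocks, hb, hc, hd]
  obtain ⟨u, hu, hdet⟩ := det_block_aux (charmatrix A) (Polynomial.C β) (X : Polynomial ℝ)
  set Q : Matrix (Fin n) (Fin n) (Polynomial ℝ) :=
    (X : Polynomial ℝ) • charmatrix A + Polynomial.C β • 1 with hQ
  -- key : det Q = (X - C (lam/2))^(2*m) * s
  have hkey : Q.det = (X - Polynomial.C (lam / 2)) ^ (2 * m) * s := by
    apply IsFractionRing.injective (Polynomial ℝ) K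
    have hdetmap : ι Q.det = ((Q.map ι).det) := RingHom.map_det ι Q
    have hA' : Q.map ι = ι X • (t • (1 : Matrix (Fin n) (Fin n) K) - A.map f) := by
      ext i j
      by_cases h : i = j
      · subst h
        simp only [hQ, Matrix.map_apply, Matrix.add_apply, Matrix.smul_apply,
          Matrix.one_apply_eq, Matrix.sub_apply, charmatrix_apply_eq, smul_eq_mul, mul_one,
          map_add, _root_.map_mul]
        rw [ht]
        field_simp [ιX_ne, hf]
        push_cast [map_add, map_pow, _root_.map_mul]
        rw [hf, RingHom.comp_apply]
        ring
      · simp only [hQ, Matrix.map_apply, Matrix.add_apply, Matrix.smul_apply,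
          Matrix.one_apply_ne h, Matrix.sub_apply, charmatrix_apply_ne _ _ _ h, smul_eq_mul,
          mul_zero, add_zero, map_neg, _root_.map_mul, Matrix.one_apply]
        rw [hf]
        simp [RingHom.comp_apply]
    have hevalq : (t • (1 : Matrix (Fin n) (Fin n) K) - A.map f).det = q.eval₂ f t := by
      exact (charpoly_eval₂ A f t).symm
    have hdetsmul : ((Q.map ι)).det = ι X ^ n * q.eval₂ f t := by
      rw [hA', Matrix.det_smul, Fintype.card_fin, hevalq]
    have hfactor : q.eval₂ f t = (t - f lam) ^ m * r.eval₂ f t := by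
      rw [hr, Polynomial.eval₂_mul, Polynomial.eval₂_pow, Polynomial.eval₂_sub,
        Polynomial.eval₂_X, Polynomial.eval₂_C]
    have c1 : (Polynomial.C (lam/2) : Polynomial ℝ) * Polynomial.C (lam/2) = Polynomial.C β := by
      rw [← Polynomial.C_mul, hβ]; congr 1; ring
    have c2 : (Polynomial.C lam : Polynomial ℝ) = Polynomial.C (lam/2) + Polynomial.C (lam/2) := by
      rw [← Polynomial.C_add]; congr 1; ring
    have pid : ((X : Polynomial ℝ) - Polynomial.C (lam/2)) ^ 2
        = X ^ 2 + Polynomial.C β - Polynomial.C lam * X := by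
      linear_combination (X : Polynomial ℝ) * c2 + c1
    have htsub : t - f lam = ι ((X - Polynomial.C (lam/2)) ^ 2) * (ι X)⁻¹ := by
      rw [ht, pid, hf]
      field_simp [ιX_ne]
      push_cast [map_add, map_sub, map_pow, _root_.map_mul]
      rw [RingHom.comp_apply]
      ring
    rw [hdetmap, hdetsmul, hfactor, htsub]
    rw [_root_.map_mul, pow_mul, map_pow]
    have hXn : (ι X : K) ^ n = ι X ^ m * ι X ^ (n - m) := by
      rw [← pow_add]; congr 1; omega
    rw [hs, mul_pow, hXn]
    rw [map_pow, map_pow, inv_pow]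
    field_simp [ιX_ne]
  have hne : (Matrix.charpoly
      (fromBlocks A (-β • 1) 1 (0 : Matrix (Fin n) (Fin n) ℝ))) ≠ 0 :=
    (Matrix.charpoly_monic _).ne_zero
  rw [Polynomial.le_rootMultiplicity_iff hne]
  have hcp : Matrix.charpoly (fromBlocks A (-β • 1) 1 (0 : Matrix (Fin n) (Fin n) ℝ))
      = u * ((X - Polynomial.C (lam / 2)) ^ (2 * m) * s) := by
    rw [Matrix.charpoly, hcm, hdet, hkey]
  rw [hcp]
  exact Dvd.dvd.mul_left (Dvd.intro s rfl) u

section eig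
variable {n : ℕ} (A : Matrix (Fin n) (Fin n) ℝ) (lam β : ℝ)

lemma mem_eig_iff (hlam : lam ≠ 0) (hβ : β = lam ^ 2 / 4)
    (v : (Fin n ⊕ Fin n) → ℝ) :
    v ∈ Module.End.eigenspace (Matrix.toLin' (fromBlocks A (-β • 1) 1 0)) (lam / 2) ↔
      A *ᵥ (v ∘ Sum.inr) = lam • (v ∘ Sum.inr) ∧ v ∘ Sum.inl = (lam / 2) • (v ∘ Sum.inr) := by
  set μ := lam / 2 with hμ
  have hμne : μ ≠ 0 := by rw [hμ]; exact div_ne_zero hlam two_ne_zero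
  rw [Module.End.mem_eigenspace_iff, Matrix.toLin'_apply, fromBlocks_mulVec]
  have e2 : (-β • (1 : Matrix (Fin n) (Fin n) ℝ)) *ᵥ (v ∘ Sum.inr) = (-β) • (v ∘ Sum.inr) := by
    rw [Matrix.smul_mulVec, Matrix.one_mulVec]
  constructor
  · intro h
    have hinr : v ∘ Sum.inl = μ • (v ∘ Sum.inr) := by
      funext j
      have := congrFun h (Sum.inr j)
      simpa using this
    refine ⟨?_, hinr⟩
    have hinl : A *ᵥ (v ∘ Sum.inl) + (-β) • (v ∘ Sum.inr) = μ • (v ∘ Sum.inl) := by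
      funext j
      have := congrFun h (Sum.inl j)
      rw [← e2]
      simpa using this
    rw [hinr, Matrix.mulVec_smul] at hinl
    have h3 : μ • (A *ᵥ (v ∘ Sum.inr)) = (μ * lam) • (v ∘ Sum.inr) := by
      funext j
      have := congrFun hinl j
      simp only [Pi.add_apply, Pi.smul_apply, smul_eq_mul] at this ⊢
      rw [hμ] at this ⊢
      rw [hβ] at this
      linear_combination this
    have := congrArg (fun w => μ⁻¹ • w) h3
    simpa [smul_smul, inv_mul_cancel₀ hμne, inv_mul_cancel_left₀ hμne] using this
  · rintro ⟨h1, h2⟩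
    funext i
    cases i with
    | inl j =>
      simp only [Sum.elim_inl, Pi.add_apply, Pi.smul_apply, smul_eq_mul, e2,
        h2, Matrix.mulVec_smul, h1]
      have hxj : v (Sum.inl j) = μ * v (Sum.inr j) := congrFun h2 j
      simp only [Pi.smul_apply, smul_eq_mul, Pi.neg_apply, Function.comp_apply]
      rw [hxj, hμ, hβ]
      ring
    | inr j =>
      have hxj : v (Sum.inl j) = μ * v (Sum.inr j) := congrFun h2 j
      simpa using hxj
end eig

lemma finrank_eig {n : ℕ} (A : Matrix (Fin n) (Fin n) ℝ) (lam β : ℝ)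
    (hlam : lam ≠ 0) (hβ : β = lam ^ 2 / 4) :
    Module.finrank ℝ
        (Module.End.eigenspace (Matrix.toLin' (fromBlocks A (-β • 1) 1 (0 : Matrix (Fin n) (Fin n) ℝ))) (lam / 2))
      = Module.finrank ℝ (Module.End.eigenspace (Matrix.toLin' A) lam) := by
  refine LinearEquiv.finrank_eq ?_
  refine
    { toFun := fun v => ⟨(v : (Fin n ⊕ Fin n) → ℝ) ∘ Sum.inr, ?_⟩
      map_add' := fun u v => Subtype.ext rfl
      map_smul' := fun c v => Subtype.ext rfl
      invFun := fun y => ⟨Sum.elim ((lam / 2) • (y : Fin n → ℝ)) (y : Fin n → ℝ), ?_⟩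
      left_inv := ?_
      right_inv := ?_ }
  · rw [Module.End.mem_eigenspace_iff, Matrix.toLin'_apply]
    exact ((mem_eig_iff A lam β hlam hβ v).mp v.2).1
  · rw [mem_eig_iff A lam β hlam hβ]
    constructor
    · have hy := y.2
      rw [Module.End.mem_eigenspace_iff, Matrix.toLin'_apply] at hy
      simpa [Sum.elim_comp_inr] using hy
    · simp [Sum.elim_comp_inl, Sum.elim_comp_inr]
  · intro v
    refine Subtype.ext (funext fun i => ?_)
    have h2 := ((mem_eig_iff A lam β hlam hβ v).mp v.2).2
    cases i with
    | inl j => simpa using congrFun h2 j |>.symm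
    | inr j => rfl
  · intro y
    exact Subtype.ext rfl

lemma not_diag {n : ℕ} (A : Matrix (Fin n) (Fin n) ℝ) (lam β : ℝ)
    (hlam : lam ≠ 0) (hβ : β = lam ^ 2 / 4) (y : Fin n → ℝ)
    (hy : A *ᵥ y = lam • y) (hy0 : y ≠ 0) :
    ¬ ∃ P : Matrix (Fin n ⊕ Fin n) (Fin n ⊕ Fin n) ℂ, IsUnit P ∧
        (P⁻¹ * ((fromBlocks A (-β • 1) 1 0).map (fun x => (x : ℂ))) * P).IsDiag := by
  rintro ⟨P, hP, hD⟩
  have hPdet : IsUnit P.det := P.isUnit_iff_isUnit_det.mp hP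
  set μ : ℂ := (lam : ℂ) / 2 with hμ
  set Ac : Matrix (Fin n) (Fin n) ℂ := A.map (fun x => (x : ℂ)) with hAc
  set Mc : Matrix (Fin n ⊕ Fin n) (Fin n ⊕ Fin n) ℂ :=
    (fromBlocks A (-β • 1) 1 0).map (fun x => (x : ℂ)) with hMc
  have hMcB : Mc = fromBlocks Ac ((-(β:ℂ)) • 1) 1 0 := by
    rw [hMc, hAc]
    ext (i|i) (j|j) <;> simp [fromBlocks, Matrix.one_apply, Matrix.map_apply] <;>
      split <;> simp
  set yc : Fin n → ℂ := fun i => (y i : ℂ) with hyc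
  have hyc0 : yc ≠ 0 := by
    intro h
    apply hy0
    funext i
    have := congrFun h i
    simpa [hyc] using this
  have hAyc : Ac *ᵥ yc = (lam : ℂ) • yc := by
    funext i
    have h0 := congrFun hy i
    simp only [mulVec, dotProduct, Pi.smul_apply, smul_eq_mul] at h0 ⊢
    rw [hAc, hyc]
    have : ∀ j, (A.map (fun x => (x:ℂ))) i j * (y j : ℂ) = ((A i j * y j : ℝ) : ℂ) := by
      intro j; simp [Matrix.map_apply]
    rw [Finset.sum_congr rfl (fun j _ => this j), ← Complex.ofReal_sum, h0]
    push_cast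
    ring
  set w : Fin n ⊕ Fin n → ℂ := Sum.elim (μ • yc) yc with hw
  set vc : Fin n ⊕ Fin n → ℂ := Sum.elim yc 0 with hvc
  set L : Matrix (Fin n ⊕ Fin n) (Fin n ⊕ Fin n) ℂ := Mc - μ • 1 with hL
  have hμ2 : μ * 2 = (lam : ℂ) := by rw [hμ]; ring
  have hβμ : ((β : ℝ) : ℂ) = μ * μ := by rw [hμ, hβ]; push_cast; ring
  have hMvc : Mc *ᵥ vc = Sum.elim ((lam : ℂ) • yc) yc := by
    rw [hMcB, fromBlocks_mulVec]
    rw [hvc, Sum.elim_comp_inl, Sum.elim_comp_inr]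
    simp [hAyc]
  have hLvc : L *ᵥ vc = w := by
    rw [hL, Matrix.sub_mulVec, hMvc, Matrix.smul_mulVec, Matrix.one_mulVec]
    funext i
    cases i with
    | inl j =>
      simp only [hw, hvc, Sum.elim_inl, Pi.sub_apply, Pi.smul_apply, smul_eq_mul]
      rw [← hμ2]; ring
    | inr j => simp [hw, hvc]
  have hMw : Mc *ᵥ w = μ • w := by
    rw [hMcB, fromBlocks_mulVec]
    funext i
    cases i with
    | inl j =>
      rw [hw, Sum.elim_comp_inl, Sum.elim_comp_inr]
      simp only [Sum.elim_inl, Matrix.mulVec_smul, hAyc, Matrix.smul_mulVec,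
        Matrix.one_mulVec, Pi.add_apply, Pi.smul_apply, smul_eq_mul]
      rw [← hμ2] at *
      have := congrFun (rfl : yc = yc) j
      simp only [hβμ]
      ring
    | inr j =>
      rw [hw, Sum.elim_comp_inl, Sum.elim_comp_inr]
      simp [Matrix.mulVec_smul]
  have hLw : L *ᵥ w = 0 := by
    rw [hL, Matrix.sub_mulVec, hMw, Matrix.smul_mulVec, Matrix.one_mulVec, sub_self]
  set N : Matrix (Fin n ⊕ Fin n) (Fin n ⊕ Fin n) ℂ := P⁻¹ * Mc * P with hN
  set D : Matrix (Fin n ⊕ Fin n) (Fin n ⊕ Fin n) ℂ := N - μ • 1 with hDdef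
  have hDdiag : D.IsDiag := hD.sub ((Matrix.isDiag_one (n := Fin n ⊕ Fin n)).smul μ)
  have hDL : D = P⁻¹ * L * P := by
    rw [hDdef, hN, hL, Matrix.mul_sub, Matrix.sub_mul]
    congr 1
    rw [Matrix.mul_smul, Matrix.smul_mul, Matrix.mul_one, Matrix.nonsing_inv_mul P hPdet]
  have hLD : L = P * D * P⁻¹ := by
    rw [hDL, Matrix.mul_assoc, Matrix.mul_assoc, Matrix.mul_nonsing_inv P hPdet,
      Matrix.mul_one, Matrix.mul_nonsing_inv_cancel_left _ _ hPdet]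
  set u : Fin n ⊕ Fin n → ℂ := P⁻¹ *ᵥ vc with hu
  have hDmul : ∀ (x : Fin n ⊕ Fin n → ℂ) i, (D *ᵥ x) i = D i i * x i := by
    intro x i
    rw [Matrix.mulVec, dotProduct]
    exact Finset.sum_eq_single i (fun j _ hj => by rw [hDdiag (Ne.symm hj), zero_mul])
      (fun h => absurd (Finset.mem_univ i) h)
  have hDDu : D *ᵥ (D *ᵥ u) = 0 := by
    have hLL : L *ᵥ (L *ᵥ vc) = 0 := by rw [hLvc, hLw]
    rw [hu, Matrix.mulVec_mulVec, Matrix.mulVec_mulVec, hDL]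
    have : P⁻¹ * L * P * (P⁻¹ * L * P) * P⁻¹ = P⁻¹ * (L * L) := by
      simp only [Matrix.mul_assoc]
      rw [Matrix.mul_nonsing_inv P hPdet, Matrix.mul_one,
        Matrix.mul_nonsing_inv_cancel_left _ _ hPdet]
    rw [this, ← Matrix.mulVec_mulVec, ← Matrix.mulVec_mulVec, hLL, Matrix.mulVec_zero]
  have hDu : D *ᵥ u = 0 := by
    funext i
    have h0 := congrFun hDDu i
    rw [hDmul, hDmul] at h0
    rw [hDmul]
    simp only [Pi.zero_apply] at h0 ⊢
    rcases mul_eq_zero.mp h0 with h | h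
    · rw [h, zero_mul]
    · rcases mul_eq_zero.mp h with h' | h'
      · rw [h', zero_mul]
      · rw [h', mul_zero]
  have hLvc0 : L *ᵥ vc = 0 := by
    rw [hLD, ← Matrix.mulVec_mulVec, ← Matrix.mulVec_mulVec, ← hu, hDu, Matrix.mulVec_zero]
  rw [hLvc] at hLvc0
  apply hyc0
  funext i
  have := congrFun hLvc0 (Sum.inr i)
  simpa [hw] using this

theorem stmt2 (n : ℕ) (A : Matrix (Fin n) (Fin n) ℝ) (lam : ℝ) (hlam : lam ≠ 0)
    (m : ℕ) (hm : 1 ≤ m)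
    (halg : (Matrix.charpoly A).rootMultiplicity lam = m)
    (hgeo : Module.finrank ℝ (Module.End.eigenspace (Matrix.toLin' A) lam) = m)
    (β : ℝ) (hβ : β = lam ^ 2 / 4) :
    let Aβ : Matrix (Fin n ⊕ Fin n) (Fin n ⊕ Fin n) ℝ :=
      Matrix.fromBlocks A (-β • 1) 1 0
    (Module.finrank ℝ
        (Module.End.eigenspace (Matrix.toLin' Aβ) (lam / 2)) = m) ∧
    2 * m ≤ (Matrix.charpoly Aβ).rootMultiplicity (lam / 2) ∧
    ¬ ∃ P : Matrix (Fin n ⊕ Fin n) (Fin n ⊕ Fin n) ℂ, IsUnit P ∧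
        (P⁻¹ * (Aβ.map (fun x => (x : ℂ))) * P).IsDiag := by
  intro Aβ
  refine ⟨?_, ?_, ?_⟩
  · exact (finrank_eig A lam β hlam hβ).trans hgeo
  · exact part2 A lam β m hβ halg
  · have hbot : Module.End.eigenspace (Matrix.toLin' A) lam ≠ ⊥ := by
      intro h
      rw [h] at hgeo
      simp only [finrank_bot] at hgeo
      omega
    obtain ⟨y, hymem, hy0⟩ := Submodule.exists_mem_ne_zero_of_ne_bot hbot
    rw [Module.End.mem_eigenspace_iff, Matrix.toLin'_apply] at hymem
    exact not_diag A lam β hlam hβ y hymem hy0
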